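/- Every free group is residually finite: for every free group F and every finite set S of non-identity elements of F, there exists a normal subgroup N of finite index in F such that N ∩ S = ∅. -/

import Mathlib

open FreeGroup Equiv

section Aux

variable {α : Type*} [DecidableEq α]

/-- In a reduced word (as produced by `FreeGroup.toWord`), adjacent letters with the
same generator have the same sign. -/
private lemma toWord_adj (w : FreeGroup α) {i : ℕ} {a : α} {b c : Bool}
    (h1 : w.toWord[i]? = some (a, b)) (h2 : w.toWord[i+1]? = some (a, c)) : c = b := by
  by_contra hbc
  have hc : c = !b := by cases b <;> cases c <;> simp_all
  subst hc
  obtain ⟨hi, hget⟩ := List.getElem?_eq_some_iff.mp h1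
  obtain ⟨hi1, hget1⟩ := List.getElem?_eq_some_iff.mp h2
  have hred : FreeGroup.reduce w.toWord = w.toWord := FreeGroup.reduce_toWord w
  have hdec : w.toWord = w.toWord.take i ++ (a,b) :: (a,!b) :: w.toWord.drop (i+2) := by
    conv_lhs => rw [← List.take_append_drop i w.toWord]
    congr 1
    rw [List.drop_eq_getElem_cons hi, List.drop_eq_getElem_cons hi1, hget, hget1]
  exact FreeGroup.reduce.not (hred.trans hdec)

/-- One step of the partial shift associated to the letter `(a, b)`:
move `i` up to `i+1` if position `i` of `M` holds `(a, b)`, otherwise move down. -/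
private def step (M : List (α × Bool)) (N : ℕ) (hN : M.length < N) (a : α) (b : Bool)
    (i : Fin N) : Fin N :=
  if h : M[(i:ℕ)]? = some (a, b) then
    ⟨(i:ℕ)+1, by have := (List.getElem?_eq_some_iff.mp h).1; omega⟩
  else ⟨(i:ℕ)-1, by have := i.isLt; omega⟩

private lemma step_pos {M : List (α × Bool)} {N : ℕ} (hN : M.length < N) {a : α} {b : Bool}
    {i : Fin N} (h : M[(i:ℕ)]? = some (a, b)) (h' : (i:ℕ)+1 < N) :
    step M N hN a b i = ⟨(i:ℕ)+1, h'⟩ := by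
  simp only [step, dif_pos h]

private lemma step_neg {M : List (α × Bool)} {N : ℕ} (hN : M.length < N) {a : α} {b : Bool}
    {i : Fin N} (h : ¬ M[(i:ℕ)]? = some (a, b)) (h' : (i:ℕ)-1 < N) :
    step M N hN a b i = ⟨(i:ℕ)-1, h'⟩ := by
  simp only [step, dif_neg h]

/-- Construction of the permutations associated to each generator. -/
private lemma exists_perm_family (M : List (α × Bool)) (N : ℕ)
    (hN : M.length < N)
    (K : ∀ (j : ℕ) (a : α) (b c : Bool),
      M[j]? = some (a,b) → M[j+1]? = some (a,c) → c = b) :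
    ∃ f : α → Equiv.Perm (Fin N),
      (∀ (j : ℕ) (a : α) (hj : j < N) (hj1 : j+1 < N),
        M[j]? = some (a,true) → f a ⟨j,hj⟩ = ⟨j+1,hj1⟩) ∧
      (∀ (j : ℕ) (a : α) (hj : j < N) (hj1 : j+1 < N),
        M[j]? = some (a,false) → f a ⟨j+1,hj1⟩ = ⟨j,hj⟩) := by
  classical
  have key : ∀ a : α, ∃ ea : Equiv.Perm (Fin N),
      (∀ (j : ℕ) (hj : j < N) (hj1 : j+1 < N),
        M[j]? = some (a,true) → ea ⟨j,hj⟩ = ⟨j+1,hj1⟩) ∧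
      (∀ (j : ℕ) (hj : j < N) (hj1 : j+1 < N),
        M[j]? = some (a,false) → ea ⟨j+1,hj1⟩ = ⟨j,hj⟩) := by
    intro a
    set p : Fin N → Prop := fun i =>
      M[(i:ℕ)]? = some (a, true) ∨ (M[(i:ℕ)-1]? = some (a, false) ∧ (i:ℕ) ≠ 0) with hp
    set q : Fin N → Prop := fun i =>
      (M[(i:ℕ)-1]? = some (a, true) ∧ (i:ℕ) ≠ 0) ∨ M[(i:ℕ)]? = some (a, false) with hq
    have hlt : ∀ {j : ℕ} {x : α × Bool}, M[j]? = some x → j + 1 < N := by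
      intro j x h
      have := (List.getElem?_eq_some_iff.mp h).1
      omega
    set F : Fin N → Fin N := step M N hN a true with hFdef
    set G : Fin N → Fin N := step M N hN a false with hGdef
    have hF : ∀ (i : Fin N), p i → q (F i) := by
      intro i hi
      by_cases h : M[(i:ℕ)]? = some (a, true)
      · rw [hFdef, step_pos hN h (hlt h)]
        simp only [hq, Fin.val_mk]
        left
        exact ⟨by simpa using h, by omega⟩
      · have hr := hi.resolve_left h
        rw [hFdef, step_neg hN h (by have := i.isLt; omega)]
        simp only [hq, Fin.val_mk]
        right
        exact hr.1
    have hG : ∀ (i : Fin N), q i → p (G i) := by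
      intro i hi
      by_cases h : M[(i:ℕ)]? = some (a, false)
      · rw [hGdef, step_pos hN h (hlt h)]
        simp only [hp, Fin.val_mk]
        right
        exact ⟨by simpa using h, by omega⟩
      · have hr := hi.resolve_right h
        rw [hGdef, step_neg hN h (by have := i.isLt; omega)]
        simp only [hp, Fin.val_mk]
        left
        exact hr.1
    have hGF : ∀ (i : Fin N), p i → G (F i) = i := by
      intro i hi
      by_cases h : M[(i:ℕ)]? = some (a, true)
      · have h2 : ¬ M[(i:ℕ)+1]? = some (a, false) := by
          intro hc
          have := K (i:ℕ) a true false h hc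
          simp at this
        rw [hFdef, step_pos hN h (hlt h), hGdef,
          step_neg hN (by simpa using h2) (by simp)]
        apply Fin.ext
        simp
      · have hr := hi.resolve_left h
        have h0 : (i:ℕ) ≠ 0 := hr.2
        have h2 : M[(i:ℕ)-1]? = some (a, false) := hr.1
        rw [hFdef, step_neg hN h (by have := i.isLt; omega), hGdef,
          step_pos hN (by simpa using h2) (by simp only [Fin.val_mk]; have := i.isLt; omega)]
        apply Fin.ext
        simp
        omega
    have hFG : ∀ (i : Fin N), q i → F (G i) = i := by
      intro i hi
      by_cases h : M[(i:ℕ)]? = some (a, false)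
      · have h2 : ¬ M[(i:ℕ)+1]? = some (a, true) := by
          intro hc
          have := K (i:ℕ) a false true h hc
          simp at this
        rw [hGdef, step_pos hN h (hlt h), hFdef,
          step_neg hN (by simpa using h2) (by simp)]
        apply Fin.ext
        simp
      · have hr := hi.resolve_right h
        have h0 : (i:ℕ) ≠ 0 := hr.2
        have h2 : M[(i:ℕ)-1]? = some (a, true) := hr.1
        rw [hGdef, step_neg hN h (by have := i.isLt; omega), hFdef,
          step_pos hN (by simpa using h2) (by simp only [Fin.val_mk]; have := i.isLt; omega)]
        apply Fin.ext
        simp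
        omega
    let e : {i : Fin N // p i} ≃ {i : Fin N // q i} :=
      { toFun := fun x => ⟨F x.1, hF x.1 x.2⟩
        invFun := fun x => ⟨G x.1, hG x.1 x.2⟩
        left_inv := fun x => Subtype.ext (hGF x.1 x.2)
        right_inv := fun x => Subtype.ext (hFG x.1 x.2) }
    refine ⟨e.extendSubtype, ?_, ?_⟩
    · intro j hj hj1 hM
      have hpj : p ⟨j, hj⟩ := Or.inl (by simpa using hM)
      rw [Equiv.extendSubtype_apply_of_mem e ⟨j,hj⟩ hpj]
      show F ⟨j,hj⟩ = _
      rw [hFdef, step_pos hN (by simpa using hM) (by simpa using hj1)]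
    · intro j hj hj1 hM
      have hpj : p ⟨j+1, hj1⟩ := Or.inr ⟨by simp only [Fin.val_mk]; simpa using hM, by simp⟩
      rw [Equiv.extendSubtype_apply_of_mem e ⟨j+1,hj1⟩ hpj]
      show F ⟨j+1,hj1⟩ = _
      have h2 : ¬ M[j+1]? = some (a, true) := by
        intro hc
        have := K j a false true hM hc
        simp at this
      rw [hFdef, step_neg hN (by simpa using h2) (by simp only [Fin.val_mk]; omega)]
      apply Fin.ext
      simp
  choose f hf1 hf2 using key
  exact ⟨f, fun j a => hf1 a j, fun j a => hf2 a j⟩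

end Aux

/-- Every nontrivial element of a free group survives in some finite symmetric group. -/
private lemma exists_perm_hom {α : Type*} (w : FreeGroup α) (hw : w ≠ 1) :
    ∃ (m : ℕ) (φ : FreeGroup α →* Equiv.Perm (Fin m)), φ w ≠ 1 := by
  classical
  set L := w.toWord with hLdef
  have hn : 0 < L.length := by
    rcases Nat.eq_zero_or_pos L.length with h | h
    · exact absurd (FreeGroup.toWord_eq_nil_iff.mp (List.length_eq_zero_iff.mp h)) hw
    · exact h
  set M := L.reverse with hMdef
  have hMlen : M.length = L.length := by rw [hMdef]; exact List.length_reverse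
  have K : ∀ (j : ℕ) (a : α) (b c : Bool),
      M[j]? = some (a,b) → M[j+1]? = some (a,c) → c = b := by
    intro j a b c h1 h2
    have hj1 : j + 1 < L.length := by
      have := (List.getElem?_eq_some_iff.mp h2).1
      omega
    have e1 : M[j]? = L[L.length - 1 - j]? := by
      rw [hMdef, List.getElem?_reverse (by omega)]
    have e2 : M[j+1]? = L[L.length - 1 - (j+1)]? := by
      rw [hMdef, List.getElem?_reverse (by omega)]
    have hi : L.length - 1 - (j+1) + 1 = L.length - 1 - j := by omega
    refine (toWord_adj w (i := L.length - 1 - (j+1)) (a := a) (b := c) (c := b) ?_ ?_).symm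
    · rw [← e2]; exact h2
    · rw [hi, ← e1]; exact h1
  obtain ⟨f, hf1, hf2⟩ := exists_perm_family M (L.length+1) (by omega) K
  set e : (α × Bool) → Equiv.Perm (Fin (L.length+1)) :=
    fun x => cond x.2 (f x.1) (f x.1)⁻¹ with hedef
  have C : ∀ j (hj : j ≤ L.length),
      (((L.drop (L.length - j)).map e).prod) ⟨0, by omega⟩ = ⟨j, by omega⟩ := by
    intro j
    induction j with
    | zero =>
      intro _
      rw [Nat.sub_zero, List.drop_length]
      simp
    | succ j ih =>
      intro hj
      have hk : L.length - (j+1) < L.length := by omega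
      have harg : L.length - (j+1) + 1 = L.length - j := by omega
      have hstep : L.drop (L.length - (j+1)) = (L[L.length-(j+1)]'hk) :: L.drop (L.length - j) := by
        rw [List.drop_eq_getElem_cons hk, harg]
      rw [hstep, List.map_cons, List.prod_cons, Equiv.Perm.mul_apply, ih (by omega)]
      have hM : M[j]? = some (L[L.length - (j+1)]'hk) := by
        have e1 : M[j]? = L[L.length - 1 - j]? := by
          rw [hMdef, List.getElem?_reverse (by omega)]
        have e3 : L.length - 1 - j = L.length - (j+1) := by omega
        rw [e1, e3, List.getElem?_eq_getElem hk]
      rcases hab : L[L.length - (j+1)]'hk with ⟨a, b⟩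
      rw [hab] at hM
      cases b with
      | true =>
        simp only [hedef, cond_true]
        exact hf1 j a (by omega) (by omega) hM
      | false =>
        simp only [hedef, cond_false]
        have h1 := hf2 j a (by omega) (by omega) hM
        have h2 : (f a)⁻¹ (f a ⟨j+1, by omega⟩) = ⟨j+1, by omega⟩ :=
          Equiv.symm_apply_apply _ _
        rw [h1] at h2
        exact h2
  refine ⟨L.length+1, FreeGroup.lift f, ?_⟩
  intro hone
  have hw' : FreeGroup.lift f w = ((L.map e)).prod := by
    conv_lhs => rw [← FreeGroup.mk_toWord (x := w)]
    exact FreeGroup.lift_mk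
  have hC := C L.length le_rfl
  rw [Nat.sub_self, List.drop_zero, ← hw', hone] at hC
  simp only [Equiv.Perm.one_apply] at hC
  have : (0 : ℕ) = L.length := congrArg Fin.val hC
  omega

/-- free groups are residually finite: every finite set of
non-identity elements can be avoided by a normal subgroup of finite index. -/
theorem freeGroup_residually_finite
    {α : Type*} (S : Finset (FreeGroup α)) (hS : ∀ s ∈ S, s ≠ 1) :
    ∃ N : Subgroup (FreeGroup α), N.Normal ∧ N.FiniteIndex ∧ ∀ s ∈ S, s ∉ N := by
  classical
  have H : ∀ s : {x // x ∈ S}, ∃ (m : ℕ) (φ : FreeGroup α →* Equiv.Perm (Fin m)),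
      φ (s : FreeGroup α) ≠ 1 := fun s => exists_perm_hom (s : FreeGroup α) (hS s s.2)
  choose m φ hφ using H
  let Φ : FreeGroup α →* (∀ s : {x // x ∈ S}, Equiv.Perm (Fin (m s))) := Pi.monoidHom φ
  refine ⟨Φ.ker, inferInstance, inferInstance, ?_⟩
  intro s hs hmem
  have h1 : Φ s = 1 := hmem
  have h2 : φ ⟨s, hs⟩ s = 1 := congrFun h1 ⟨s, hs⟩
  exact hφ ⟨s, hs⟩ h2
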